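/- arXiv:2106.11273 — 3 statements merged into one kernel-verified Lean document; each statement's English description precedes it below -/
import Mathlib

section
/- Suppose h^↓ > 0, Δb↑ ≥ 0, ξ = h^↓/Δb↑ (with ξ = +∞ if Δb↑ = 0), G > 0, ξ_C = 1 + 1/G, γ = 0 for ξ ≤ 1, γ = G(ξ−1) for 1 ≤ ξ ≤ ξ_C, γ = 1 for ξ ≥ ξ_C. Let h^η satisfy h^↓ − Δb↑ ≤ h^η ≤ h^↑ + Δb↑ and h^h satisfy h^↓ ≤ h^h ≤ h^↑, where 0 ≤ h^↓ ≤ h^↑. Then the convex combination h = (1−γ)h^h + γ·h^η satisfies (1 − 1/ξ_C)·h^↓ ≤ h ≤ h^↑ + h^↓/ξ_C. -/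
theorem stmt_11 (hdown hup Δb G γ hh hη : ℝ)
    (hdown_pos : 0 < hdown) (hΔb : 0 ≤ Δb) (hG : 0 < G)
    (hle : hdown ≤ hup)
    (hγ0 : Δb = 0 → γ = 1)
    (hγpos : 0 < Δb →
      ((hdown / Δb ≤ 1 → γ = 0) ∧
       (1 ≤ hdown / Δb → hdown / Δb ≤ 1 + 1 / G → γ = G * (hdown / Δb - 1)) ∧
       (1 + 1 / G ≤ hdown / Δb → γ = 1)))
    (hhh : hdown ≤ hh) (hhh' : hh ≤ hup)
    (hhη : hdown - Δb ≤ hη) (hhη' : hη ≤ hup + Δb) :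
    (1 - 1 / (1 + 1 / G)) * hdown ≤ (1 - γ) * hh + γ * hη ∧
    (1 - γ) * hh + γ * hη ≤ hup + hdown / (1 + 1 / G) := by
  have hGC : (0:ℝ) < 1 + 1 / G := by positivity
  have hG1 : (0:ℝ) < G + 1 := by linarith
  have hGinv : 1 / G * G = 1 := by field_simp
  have hCeq : hdown / (1 + 1 / G) = hdown * G / (G + 1) := by
    rw [div_eq_div_iff hGC.ne' hG1.ne']; field_simp
  have key : 0 ≤ γ ∧ γ ≤ 1 ∧ γ * Δb ≤ hdown / (1 + 1 / G) := by
    rcases eq_or_lt_of_le hΔb with h0 | hpos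
    · rw [hγ0 h0.symm]
      exact ⟨by norm_num, le_refl _, by rw [← h0, mul_zero]; positivity⟩
    · obtain ⟨c1, c2, c3⟩ := hγpos hpos
      have hξΔ : hdown / Δb * Δb = hdown := div_mul_cancel₀ _ (ne_of_gt hpos)
      rcases le_or_gt (hdown / Δb) 1 with h1 | h1
      · rw [c1 h1, zero_mul]
        exact ⟨le_refl _, by norm_num, by positivity⟩
      · rcases le_or_gt (hdown / Δb) (1 + 1 / G) with h2 | h2
        · rw [c2 h1.le h2, hCeq]
          have hs : 0 ≤ hdown / Δb - 1 := by linarith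
          have hhd : hdown ≤ (1 + 1 / G) * Δb := (div_le_iff₀ hpos).mp h2
          have he : (hdown / Δb - 1) * Δb = hdown - Δb := by
            rw [sub_mul, hξΔ, one_mul]
          have hm : hdown * G ≤ Δb * (G + 1) := by
            have := mul_le_mul_of_nonneg_right hhd hG.le
            nlinarith [hGinv]
          refine ⟨by positivity, ?_, ?_⟩
          · have h2' : hdown / Δb - 1 ≤ 1 / G := by linarith
            have := mul_le_mul_of_nonneg_left h2' hG.le
            nlinarith [hGinv]
          · have hrw : G * (hdown / Δb - 1) * Δb = G * (hdown - Δb) := by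
              rw [mul_assoc, he]
            rw [hrw, le_div_iff₀ hG1]
            nlinarith [mul_le_mul_of_nonneg_right hm hG.le]
        · rw [c3 h2.le, one_mul, hCeq]
          refine ⟨by norm_num, le_refl _, ?_⟩
          rw [le_div_iff₀ hG1]
          have hhd : (1 + 1 / G) * Δb ≤ hdown := (le_div_iff₀ hpos).mp h2.le
          have heq : (1 + 1 / G) * Δb * G = Δb * (G + 1) := by field_simp
          have := mul_le_mul_of_nonneg_right hhd hG.le
          rw [heq] at this; linarith
  obtain ⟨k1, k2, k3⟩ := key
  have hlow : (1 - 1 / (1 + 1 / G)) * hdown = hdown - hdown / (1 + 1 / G) := by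
    field_simp
  constructor
  · rw [hlow]
    nlinarith [mul_le_mul_of_nonneg_left hhh (by linarith : (0:ℝ) ≤ 1 - γ),
      mul_le_mul_of_nonneg_left hhη k1]
  · nlinarith [mul_le_mul_of_nonneg_left hhh' (by linarith : (0:ℝ) ≤ 1 - γ),
      mul_le_mul_of_nonneg_left hhη' k1]
end

section
/- Let h_{j−1}, h_j, h_{j+1} > 0 be depths, u_{j−1}, u_j, u_{j+1} reals, q_i = u_i·h_i the fluxes, K⁺, K⁻ > 0, α⁻ ∈ [0,1], and κ = min(1, K⁺·h_j/h_{j−1}, K⁻·h_j/h_{j+1}). If q⁻ is any real with |q⁻ − q_j| ≤ κ·α⁻·|q_{j+1} − q_j| and sign(q⁻ − q_j) = sign(q_{j+1} − q_j) or q⁻ = q_j, then |q⁻| ≤ h_j·(|u_j| + K⁻·α⁻·|u_{j+1}|). -/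
theorem stmt_12 (hjm hj hjp ujm uj ujp Kp Km αm qminus : ℝ)
    (hhm : 0 < hjm) (hhj : 0 < hj) (hhp : 0 < hjp)
    (hKp : 0 < Kp) (hKm : 0 < Km) (hαm : 0 ≤ αm) (hαm1 : αm ≤ 1)
    (qj : ℝ) (qjp : ℝ) (hqj : qj = uj * hj) (hqjp : qjp = ujp * hjp)
    (κ : ℝ) (hκ : κ = min 1 (min (Kp * hj / hjm) (Km * hj / hjp)))
    (habs : |qminus - qj| ≤ κ * αm * |qjp - qj|)
    (hsgn : Real.sign (qminus - qj) = Real.sign (qjp - qj) ∨ qminus = qj) :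
    |qminus| ≤ hj * (|uj| + Km * αm * |ujp|) := by
  have hκ0 : 0 ≤ κ := by
    rw [hκ]
    have h1 : 0 ≤ Kp * hj / hjm := by positivity
    have h2 : 0 ≤ Km * hj / hjp := by positivity
    simp [le_min_iff]; constructor <;> positivity
  have hκ1 : κ ≤ 1 := by rw [hκ]; exact min_le_left _ _
  have hκhp : κ * hjp ≤ Km * hj := by
    have : κ ≤ Km * hj / hjp := by
      rw [hκ]; exact le_trans (min_le_right _ _) (min_le_right _ _)
    calc κ * hjp ≤ (Km * hj / hjp) * hjp := by nlinarith
      _ = Km * hj := by field_simp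
  have base : |qj| ≤ hj * (|uj| + Km * αm * |ujp|) := by
    rw [hqj, abs_mul, abs_of_pos hhj]
    nlinarith [mul_nonneg (mul_nonneg (mul_nonneg hKm.le hαm) hhj.le) (abs_nonneg ujp)]
  -- main
  have key : |qminus| ≤ |qj| + κ * αm * |qjp| := by
    rcases hsgn with hs | heq
    · rcases eq_or_ne qjp qj with hd0 | hdne
      · have : |qminus - qj| ≤ 0 := by
          rw [hd0] at habs; simpa using habs
        have : qminus = qj := by
          have := abs_nonpos_iff.mp this; linarith
        rw [this]; nlinarith [mul_nonneg (mul_nonneg hκ0 hαm) (abs_nonneg qjp)]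
      · set d := qjp - qj with hd
        set e := qminus - qj with he
        have hdne' : d ≠ 0 := sub_ne_zero.mpr hdne
        have hed : 0 ≤ e * d := by
          rcases lt_trichotomy d 0 with h | h | h
          · have hsd : Real.sign d = -1 := Real.sign_of_neg h
            rcases lt_trichotomy e 0 with he' | he' | he'
            · nlinarith
            · simp [he'] 
            · have : Real.sign e = 1 := Real.sign_of_pos he'
              rw [this, hsd] at hs; norm_num at hs
          · exact absurd h hdne'
          · have hsd : Real.sign d = 1 := Real.sign_of_pos h
            rcases lt_trichotomy e 0 with he' | he' | he'
            · have : Real.sign e = -1 := Real.sign_of_neg he'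
              rw [this, hsd] at hs; norm_num at hs
            · simp [he']
            · nlinarith
        set t := e / d with ht
        have ht0 : 0 ≤ t := by
          rw [ht]
          have : e / d = e * d / d ^ 2 := by field_simp
          rw [this]; positivity
        have htκ : t ≤ κ * αm := by
          have habs' : |e| ≤ κ * αm * |d| := habs
          have : t ≤ |t| := le_abs_self t
          have htabs : |t| = |e| / |d| := by rw [ht, abs_div]
          have hdpos : 0 < |d| := abs_pos.mpr hdne'
          rw [htabs] at this
          refine this.trans ?_
          rw [div_le_iff₀ hdpos]
          exact habs'
        have hqm : qminus = (1 - t) * qj + t * qjp := by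
          have : t * d = e := div_mul_cancel₀ e hdne'
          have : qminus = qj + t * d := by rw [this, he]; ring
          rw [this]; rw [hd]; ring
        have ht1 : t ≤ 1 := le_trans htκ (by nlinarith)
        rw [hqm]
        calc |(1 - t) * qj + t * qjp| ≤ |(1 - t) * qj| + |t * qjp| := abs_add_le _ _
          _ = (1 - t) * |qj| + t * |qjp| := by
              rw [abs_mul, abs_mul, abs_of_nonneg (by linarith : (0:ℝ) ≤ 1 - t),
                abs_of_nonneg ht0]
          _ ≤ |qj| + κ * αm * |qjp| := by nlinarith [abs_nonneg qj, abs_nonneg qjp]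
    · rw [heq]; nlinarith [mul_nonneg (mul_nonneg hκ0 hαm) (abs_nonneg qjp)]
  have hbound : κ * αm * |qjp| ≤ Km * αm * hj * |ujp| := by
    rw [hqjp, abs_mul, abs_of_pos hhp]
    nlinarith [mul_le_mul_of_nonneg_left hκhp (mul_nonneg hαm (abs_nonneg ujp))]
  calc |qminus| ≤ |qj| + κ * αm * |qjp| := key
    _ ≤ hj * |uj| + Km * αm * hj * |ujp| := by
        rw [hqj, abs_mul, abs_of_pos hhj]; nlinarith
    _ = hj * (|uj| + Km * αm * |ujp|) := by ring
end

section
/- Let a₁, a₂ ∈ [−1, 1] and define f_q(x) = 1 − a₁a₂/3 + (a₁ + a₂)x + a₁a₂x² on [−1, 1] (the quadratic product reconstruction with corrected mean). If |a₁| ≤ α and |a₂| ≤ α with α ≤ (3 − √3)/2, then f_q(x) ≥ 0 for all x ∈ [−1, 1]. Conversely, if α > (3 − √3)/2 there exist a₁, a₂ with |a₁|, |a₂| ≤ α and x ∈ [−1,1] with f_q(x) < 0. -/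
set_option maxHeartbeats 1600000 in
theorem stmt_13 :
    (∀ a₁ a₂ α : ℝ, a₁ ∈ Set.Icc (-1 : ℝ) 1 → a₂ ∈ Set.Icc (-1 : ℝ) 1 →
      |a₁| ≤ α → |a₂| ≤ α → α ≤ (3 - Real.sqrt 3) / 2 →
      ∀ x ∈ Set.Icc (-1 : ℝ) 1,
        0 ≤ 1 - a₁ * a₂ / 3 + (a₁ + a₂) * x + a₁ * a₂ * x ^ 2) ∧
    (∀ α : ℝ, (3 - Real.sqrt 3) / 2 < α →
      ∃ a₁ a₂ x : ℝ, a₁ ∈ Set.Icc (-1 : ℝ) 1 ∧ a₂ ∈ Set.Icc (-1 : ℝ) 1 ∧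
        |a₁| ≤ α ∧ |a₂| ≤ α ∧ x ∈ Set.Icc (-1 : ℝ) 1 ∧
        1 - a₁ * a₂ / 3 + (a₁ + a₂) * x + a₁ * a₂ * x ^ 2 < 0) := by
  have hr2 : Real.sqrt 3 ^ 2 = 3 := Real.sq_sqrt (by norm_num)
  have hr0 : (0:ℝ) ≤ Real.sqrt 3 := Real.sqrt_nonneg 3
  have hr1 : (1:ℝ) ≤ Real.sqrt 3 := by nlinarith
  have hr3 : Real.sqrt 3 ≤ 3 := by nlinarith
  constructor
  · rintro a₁ a₂ α ⟨h1l, h1r⟩ ⟨h2l, h2r⟩ hb1 hb2 hα x ⟨hxl, hxr⟩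
    obtain ⟨hA1l, hA1r⟩ := abs_le.mp hb1
    obtain ⟨hA2l, hA2r⟩ := abs_le.mp hb2
    have hα1 : α ≤ 1 := by nlinarith
    rcases le_or_gt 0 (a₁ * a₂) with hp | hp
    · -- key: 1 - 2α + 2α²/3 ≥ 0, since α ≤ (3-√3)/2
      have hkey : 0 ≤ 1 - 2*α + 2*α^2/3 := by nlinarith [sq_nonneg (Real.sqrt 3 - 1)]
      rcases le_or_gt 0 (a₁ + a₂) with hs | hs
      · have h2p : 2*(a₁*a₂) ≤ a₁ + a₂ := by
          nlinarith [sq_nonneg (a₁ - a₂), mul_nonneg hs (by linarith : (0:ℝ) ≤ 2 - (a₁ + a₂))]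
        have q1 : (0:ℝ) ≤ (α - a₁)*(1 - 2*a₂/3) :=
          mul_nonneg (by linarith) (by linarith)
        have q2 : (0:ℝ) ≤ (α - a₂)*(1 - 2*α/3) :=
          mul_nonneg (by linarith) (by linarith)
        have hf1 : 0 ≤ 1 + 2*(a₁*a₂)/3 - (a₁ + a₂) := by nlinarith [q1, q2]
        have q3 : (0:ℝ) ≤ (x+1)*((a₁+a₂) - 2*(a₁*a₂)) :=
          mul_nonneg (by linarith) (by linarith)
        have q4 : (0:ℝ) ≤ (a₁*a₂)*(x+1)^2 := mul_nonneg hp (sq_nonneg _)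
        nlinarith [hf1, q3, q4]
      · have h2p : 2*(a₁*a₂) ≤ -(a₁ + a₂) := by
          nlinarith [sq_nonneg (a₁ - a₂),
            mul_nonneg (by linarith : (0:ℝ) ≤ -(a₁+a₂)) (by linarith : (0:ℝ) ≤ 2 + (a₁ + a₂))]
        have q1 : (0:ℝ) ≤ (α + a₁)*(1 + 2*a₂/3) :=
          mul_nonneg (by linarith) (by linarith)
        have q2 : (0:ℝ) ≤ (α + a₂)*(1 - 2*α/3) :=
          mul_nonneg (by linarith) (by linarith)
        have hf1 : 0 ≤ 1 + 2*(a₁*a₂)/3 + (a₁ + a₂) := by nlinarith [q1, q2]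
        have q3 : (0:ℝ) ≤ (1-x)*(-(a₁+a₂) - 2*(a₁*a₂)) :=
          mul_nonneg (by linarith) (by linarith)
        have q4 : (0:ℝ) ≤ (a₁*a₂)*(1-x)^2 := mul_nonneg hp (sq_nonneg _)
        nlinarith [hf1, q3, q4]
    · have hx1 : 0 ≤ 1 + a₁ * x := by
        nlinarith [mul_nonneg (by linarith : (0:ℝ) ≤ 1 + a₁) (by linarith : (0:ℝ) ≤ 1 + x),
          mul_nonneg (by linarith : (0:ℝ) ≤ 1 - a₁) (by linarith : (0:ℝ) ≤ 1 - x)]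
      have hx2 : 0 ≤ 1 + a₂ * x := by
        nlinarith [mul_nonneg (by linarith : (0:ℝ) ≤ 1 + a₂) (by linarith : (0:ℝ) ≤ 1 + x),
          mul_nonneg (by linarith : (0:ℝ) ≤ 1 - a₂) (by linarith : (0:ℝ) ≤ 1 - x)]
      nlinarith [mul_nonneg hx1 hx2]
  · intro α hα
    set t := min α 1 with ht
    have htα : t ≤ α := min_le_left _ _
    have ht1 : t ≤ 1 := min_le_right _ _
    have htc : (3 - Real.sqrt 3) / 2 < t := lt_min hα (by nlinarith)
    have ht0 : 0 ≤ t := le_trans (by nlinarith) htc.le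
    refine ⟨-t, -t, 1, ⟨by linarith, by linarith⟩, ⟨by linarith, by linarith⟩,
      ?_, ?_, ⟨by norm_num, le_refl 1⟩, ?_⟩
    · rw [abs_of_nonpos (by linarith)]; linarith
    · rw [abs_of_nonpos (by linarith)]; linarith
    · nlinarith [mul_pos (by linarith : (0:ℝ) < t - (3 - Real.sqrt 3)/2)
        (by nlinarith : (0:ℝ) < (3 + Real.sqrt 3)/2 - t)]
end
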